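/- Let f : [a,b] → ℝ be such that f' is absolutely continuous on [a,b] and f'' ∈ L^∞([a,b]). Then for all x ∈ [a, (a+b)/2], |(1/2)[(f(x)+f(a+b-x))/2 + (f(a)+f(b))/2] - (1/2)(x-(a+b)/2)·(f'(x)-f'(a+b-x))/2 - (1/(b-a))∫_a^b f(t) dt| ≤ [(1/3)·((a+3b)/4 - x)(x-a)²/(b-a)³ + (1/3)·((a+b)/2 - x)³/(b-a)³]·(b-a)²·‖f''‖_∞. -/

import Mathlib

open MeasureTheory Set

/-- integral of a quadratic polynomial -/
lemma integral_quad (α β γ c d : ℝ) :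
    ∫ t in c..d, (α + β*t + γ*t^2) =
      (α*d + β/2*d^2 + γ/3*d^3) - (α*c + β/2*c^2 + γ/3*c^3) := by
  apply intervalIntegral.integral_eq_sub_of_hasDerivAt
  · intro t _
    have h1 : HasDerivAt (fun s : ℝ => α * s) (α * 1) t := (hasDerivAt_id t).const_mul α
    have h2 : HasDerivAt (fun s : ℝ => β/2 * s^2) (β/2 * (2 * t^1)) t :=
      (hasDerivAt_pow 2 t).const_mul (β/2)
    have h3 : HasDerivAt (fun s : ℝ => γ/3 * s^3) (γ/3 * (3 * t^2)) t :=
      (hasDerivAt_pow 3 t).const_mul (γ/3)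
    have := (h1.add h2).add h3
    convert this using 1
    · funext s; simp only [Pi.add_apply]
    · ring
  · exact (Continuous.intervalIntegrable (by fun_prop) c d)

/-- double integration by parts against a quadratic kernel with second derivative -1 -/
lemma ibp2 (a b c d : ℝ) (f f' f'' : ℝ → ℝ)
    (hf' : ∀ t ∈ Icc a b, HasDerivAt f (f' t) t)
    (hf'' : ∀ t ∈ Icc a b, HasDerivAt f' (f'' t) t)
    (hint : IntervalIntegrable f'' volume a b)
    (hab : a ≤ b)
    (hsub : uIcc c d ⊆ Icc a b)
    (q q' : ℝ → ℝ) (hq : ∀ t, HasDerivAt q (q' t) t)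
    (hq' : ∀ t, HasDerivAt q' (-1) t) :
    ∫ t in c..d, q t * f'' t
      = q d * f' d - q c * f' c - q' d * f d + q' c * f c - ∫ t in c..d, f t := by
  have hq'cont : Continuous q' := by
    rw [continuous_iff_continuousAt]; exact fun t => (hq' t).continuousAt
  have hf''sub : IntervalIntegrable f'' volume c d := by
    apply hint.mono_set
    rwa [uIcc_of_le hab]
  have hf'cont : ContinuousOn f' (uIcc c d) :=
    fun t ht => ((hf'' t (hsub ht)).continuousAt).continuousWithinAt
  have step1 : ∫ t in c..d, q t * f'' t
      = q d * f' d - q c * f' c - ∫ t in c..d, q' t * f' t :=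
    intervalIntegral.integral_mul_deriv_eq_deriv_mul
      (fun t _ => hq t) (fun t ht => hf'' t (hsub ht))
      (hq'cont.intervalIntegrable c d) hf''sub
  have step2 : ∫ t in c..d, q' t * f' t
      = q' d * f d - q' c * f c - ∫ t in c..d, (-1) * f t :=
    intervalIntegral.integral_mul_deriv_eq_deriv_mul
      (fun t _ => hq' t) (fun t ht => hf' t (hsub ht))
      (continuous_const.intervalIntegrable c d)
      (hf'cont.intervalIntegrable)
  have step3 : ∫ t in c..d, (-1) * f t = - ∫ t in c..d, f t := by
    simp [neg_one_mul, intervalIntegral.integral_neg]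
  rw [step1, step2, step3]; ring

set_option maxHeartbeats 1000000 in
theorem companion_ostrowski_like
    (a b : ℝ) (hab : a < b) (f f' f'' : ℝ → ℝ) (M : ℝ)
    (hf' : ∀ t ∈ Icc a b, HasDerivAt f (f' t) t)
    (hf'' : ∀ t ∈ Icc a b, HasDerivAt f' (f'' t) t)
    (hint : IntervalIntegrable f'' volume a b)
    (hM : ∀ᵐ t ∂volume, t ∈ Icc a b → |f'' t| ≤ M)
    (x : ℝ) (hx : x ∈ Icc a ((a + b) / 2)) :
    |(1/2) * ((f x + f (a + b - x)) / 2 + (f a + f b) / 2)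
      - (1/2) * (x - (a + b) / 2) * ((f' x - f' (a + b - x)) / 2)
      - (1 / (b - a)) * ∫ t in a..b, f t|
    ≤ ((1/3) * (((a + 3*b)/4 - x) * (x - a)^2 / (b - a)^3)
       + (1/3) * (((a + b)/2 - x)^3 / (b - a)^3)) * (b - a)^2 * M := by
  obtain ⟨hax, hxm⟩ := hx
  have hβ : (0:ℝ) < b - a := by linarith
  have hxy : x ≤ a + b - x := by linarith
  have hyb : a + b - x ≤ b := by linarith
  -- M is nonnegative
  have hM0 : 0 ≤ M := by
    by_contra h
    push_neg at h
    have h2 : ∀ᵐ t ∂volume, t ∉ Icc a b := by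
      filter_upwards [hM] with t ht hta
      have := abs_nonneg (f'' t)
      linarith [ht hta]
    rw [ae_iff] at h2
    simp only [not_not, Set.setOf_mem_eq] at h2
    rw [Real.volume_Icc] at h2
    simp only [ENNReal.ofReal_eq_zero] at h2
    linarith
  -- kernels
  set q1 : ℝ → ℝ := fun t => (b-a)/4*(t-a) - (t-a)^2/2 with hq1def
  set q1' : ℝ → ℝ := fun t => (b-a)/4 - (t-a) with hq1'def
  set q2 : ℝ → ℝ := fun t => -((t-(a+b)/2)^2/2) with hq2def
  set q2' : ℝ → ℝ := fun t => -(t-(a+b)/2) with hq2'def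
  set q3 : ℝ → ℝ := fun t => (b-a)/4*(b-t) - (b-t)^2/2 with hq3def
  set q3' : ℝ → ℝ := fun t => -((b-a)/4) + (b-t) with hq3'def
  have hsa : ∀ t : ℝ, HasDerivAt (fun s : ℝ => s - a) 1 t :=
    fun t => (hasDerivAt_id t).sub_const a
  have hsm : ∀ t : ℝ, HasDerivAt (fun s : ℝ => s - (a+b)/2) 1 t :=
    fun t => (hasDerivAt_id t).sub_const ((a+b)/2)
  have hsb : ∀ t : ℝ, HasDerivAt (fun s : ℝ => b - s) (-1) t := by
    intro t
    have := (hasDerivAt_const t b).sub (hasDerivAt_id t)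
    rw [zero_sub] at this; exact this
  have hq1 : ∀ t, HasDerivAt q1 (q1' t) t := by
    intro t
    have := ((hsa t).const_mul ((b-a)/4)).sub (((hsa t).pow 2).div_const 2)
    convert this using 1
    · rfl
    · rfl
    · rfl
    · simp only [hq1'def]; ring
  have hq1' : ∀ t, HasDerivAt q1' (-1) t := by
    intro t
    have := (hasDerivAt_const t ((b-a)/4)).sub (hsa t)
    convert this using 1
    · rfl
    · rfl
    · rfl
    · norm_num
  have hq2 : ∀ t, HasDerivAt q2 (q2' t) t := by
    intro t
    have := (((hsm t).pow 2).div_const 2).neg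
    convert this using 1
    · rfl
    · rfl
    · rfl
    · simp only [hq2'def]; ring
  have hq2' : ∀ t, HasDerivAt q2' (-1) t := by
    intro t
    exact (hsm t).neg
  have hq3 : ∀ t, HasDerivAt q3 (q3' t) t := by
    intro t
    have := ((hsb t).const_mul ((b-a)/4)).sub (((hsb t).pow 2).div_const 2)
    convert this using 1
    · rfl
    · rfl
    · rfl
    · simp only [hq3'def]; ring
  have hq3' : ∀ t, HasDerivAt q3' (-1) t := by
    intro t
    have := (hasDerivAt_const t (-((b-a)/4))).add (hsb t)
    convert this using 1
    · rfl
    · rfl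
    · rfl
    · norm_num
  -- subsets
  have hsub1 : uIcc a x ⊆ Icc a b := by
    rw [uIcc_of_le hax]; exact Icc_subset_Icc le_rfl (by linarith)
  have hsub2 : uIcc x (a+b-x) ⊆ Icc a b := by
    rw [uIcc_of_le hxy]; exact Icc_subset_Icc hax hyb
  have hsub3 : uIcc (a+b-x) b ⊆ Icc a b := by
    rw [uIcc_of_le hyb]; exact Icc_subset_Icc (by linarith) le_rfl
  -- the three integration-by-parts identities
  have hI1 := ibp2 a b a x f f' f'' hf' hf'' hint hab.le hsub1 q1 q1' hq1 hq1'
  have hI2 := ibp2 a b x (a+b-x) f f' f'' hf' hf'' hint hab.le hsub2 q2 q2' hq2 hq2'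
  have hI3 := ibp2 a b (a+b-x) b f f' f'' hf' hf'' hint hab.le hsub3 q3 q3' hq3 hq3'
  -- splitting the integral of f
  have hfcont : ContinuousOn f (Icc a b) :=
    fun t ht => ((hf' t ht).continuousAt).continuousWithinAt
  have hfint : ∀ c d : ℝ, uIcc c d ⊆ Icc a b → IntervalIntegrable f volume c d :=
    fun c d h => (hfcont.mono h).intervalIntegrable
  have hsubay : uIcc a (a+b-x) ⊆ Icc a b := by
    rw [uIcc_of_le (show a ≤ a+b-x by linarith)]
    exact Icc_subset_Icc le_rfl hyb
  have hsplit : ∫ t in a..b, f t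
      = (∫ t in a..x, f t) + (∫ t in x..(a+b-x), f t) + (∫ t in (a+b-x)..b, f t) := by
    rw [intervalIntegral.integral_add_adjacent_intervals (hfint a x hsub1) (hfint x (a+b-x) hsub2),
      intervalIntegral.integral_add_adjacent_intervals (hfint a (a+b-x) hsubay)
        (hfint (a+b-x) b hsub3)]
  -- the key identity
  have key : (1/2) * ((f x + f (a + b - x)) / 2 + (f a + f b) / 2)
      - (1/2) * (x - (a + b) / 2) * ((f' x - f' (a + b - x)) / 2)
      - (1 / (b - a)) * ∫ t in a..b, f t
      = ((∫ t in a..x, q1 t * f'' t) + (∫ t in x..(a+b-x), q2 t * f'' t)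
          + (∫ t in (a+b-x)..b, q3 t * f'' t)) / (b - a) := by
    rw [hI1, hI2, hI3, hsplit, hq1def, hq1'def, hq2def, hq2'def, hq3def, hq3'def]
    field_simp
    ring
  -- the generic bound
  have habs : ∀ (c d : ℝ), c ≤ d → Icc c d ⊆ Icc a b → ∀ (q g : ℝ → ℝ), Continuous g →
      (∀ t ∈ Icc c d, |q t| ≤ g t) →
      |∫ t in c..d, q t * f'' t| ≤ M * ∫ t in c..d, g t := by
    intro c d hcd hsub q g hg hqg
    have hnn : ∀ u ∈ Icc c d, 0 ≤ M * g u :=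
      fun u hu => mul_nonneg hM0 ((abs_nonneg _).trans (hqg u hu))
    have h1 : ‖∫ t in c..d, q t * f'' t‖ ≤ |∫ t in c..d, M * g t| := by
      apply intervalIntegral.norm_integral_le_abs_of_norm_le
      · filter_upwards [ae_restrict_of_ae hM, ae_restrict_mem measurableSet_uIoc]
          with t h1 h2
        rw [uIoc_of_le hcd] at h2
        have h2' : t ∈ Icc c d := Ioc_subset_Icc_self h2
        have hb1 : |f'' t| ≤ M := h1 (hsub h2')
        calc ‖q t * f'' t‖ = |q t| * |f'' t| := abs_mul _ _
          _ ≤ g t * M := mul_le_mul (hqg t h2') hb1 (abs_nonneg _)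
              ((abs_nonneg _).trans (hqg t h2'))
          _ = M * g t := mul_comm _ _
      · exact (continuous_const.mul hg).intervalIntegrable c d
    rw [Real.norm_eq_abs, abs_of_nonneg (intervalIntegral.integral_nonneg hcd hnn),
      intervalIntegral.integral_const_mul] at h1
    exact h1
  -- bounds for the three pieces
  have hB1 : |∫ t in a..x, q1 t * f'' t| ≤ M * ((x-a)^2*(a+3*b-4*x)/24) := by
    have hg : ∀ t ∈ Icc a x, |q1 t| ≤ q1 t := by
      intro t ht
      have h1 : 0 ≤ q1 t := by
        simp only [hq1def]
        nlinarith [ht.1, ht.2]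
      rw [abs_of_nonneg h1]
    have := habs a x hax (Icc_subset_Icc le_rfl (by linarith)) q1 q1
      (by rw [hq1def]; fun_prop) hg
    apply this.trans
    have hJ : ∫ t in a..x, q1 t = (x-a)^2*(a+3*b-4*x)/24 := by
      have : ∫ t in a..x, q1 t
          = ∫ t in a..x, ((-((b-a)/4*a) - a^2/2) + ((b-a)/4 + a)*t + (-1/2)*t^2) := by
        apply intervalIntegral.integral_congr
        intro t _
        rw [hq1def]; ring
      rw [this, integral_quad]; ring
    rw [hJ]
  have hB2 : |∫ t in x..(a+b-x), q2 t * f'' t| ≤ M * (((a+b)/2 - x)^3/3) := by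
    have hg : ∀ t ∈ Icc x (a+b-x), |q2 t| ≤ (t-(a+b)/2)^2/2 := by
      intro t _
      rw [hq2def]
      simp only [abs_neg, abs_div]
      rw [abs_of_nonneg (sq_nonneg _)]
      norm_num
    have := habs x (a+b-x) hxy (Icc_subset_Icc hax hyb) q2 (fun t => (t-(a+b)/2)^2/2)
      (by fun_prop) hg
    apply this.trans
    have hJ : ∫ t in x..(a+b-x), (t-(a+b)/2)^2/2 = ((a+b)/2 - x)^3/3 := by
      have : ∫ t in x..(a+b-x), (t-(a+b)/2)^2/2
          = ∫ t in x..(a+b-x), (((a+b)/2)^2/2 + (-((a+b)/2))*t + (1/2)*t^2) := by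
        apply intervalIntegral.integral_congr
        intro t _
        ring
      rw [this, integral_quad]; ring
    rw [hJ]
  have hB3 : |∫ t in (a+b-x)..b, q3 t * f'' t| ≤ M * ((x-a)^2*(a+3*b-4*x)/24) := by
    have hg : ∀ t ∈ Icc (a+b-x) b, |q3 t| ≤ q3 t := by
      intro t ht
      have h1 : 0 ≤ q3 t := by
        simp only [hq3def]
        nlinarith [ht.1, ht.2]
      rw [abs_of_nonneg h1]
    have := habs (a+b-x) b hyb (Icc_subset_Icc (by linarith) le_rfl) q3 q3
      (by rw [hq3def]; fun_prop) hg
    apply this.trans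
    have hJ : ∫ t in (a+b-x)..b, q3 t = (x-a)^2*(a+3*b-4*x)/24 := by
      have : ∫ t in (a+b-x)..b, q3 t
          = ∫ t in (a+b-x)..b, (((b-a)/4*b - b^2/2) + (-((b-a)/4) + b)*t + (-1/2)*t^2) := by
        apply intervalIntegral.integral_congr
        intro t _
        rw [hq3def]; ring
      rw [this, integral_quad]; ring
    rw [hJ]
  -- conclude
  rw [key, abs_div, abs_of_pos hβ]
  have hsum : |(∫ t in a..x, q1 t * f'' t) + (∫ t in x..(a+b-x), q2 t * f'' t)
      + (∫ t in (a+b-x)..b, q3 t * f'' t)|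
      ≤ M * ((x-a)^2*(a+3*b-4*x)/24) + M * (((a+b)/2 - x)^3/3)
        + M * ((x-a)^2*(a+3*b-4*x)/24) :=
    (abs_add_three _ _ _).trans (add_le_add (add_le_add hB1 hB2) hB3)
  have hfinal : (M * ((x-a)^2*(a+3*b-4*x)/24) + M * (((a+b)/2 - x)^3/3)
        + M * ((x-a)^2*(a+3*b-4*x)/24)) / (b - a)
      = ((1/3) * (((a + 3*b)/4 - x) * (x - a)^2 / (b - a)^3)
       + (1/3) * (((a + b)/2 - x)^3 / (b - a)^3)) * (b - a)^2 * M := by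
    field_simp
    ring
  rw [← hfinal]
  gcongr
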